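/- Let ν₀ > 0 and K > 0, and let β₊, β₋, β_c : [0,T] → [0,∞) be C¹ functions satisfying |β_c'| + |β₊' - 2ν₀β₊| + |β₋' + 2ν₀β₋| ≤ Kδ(β_c + β₊ + β₋) on [0,T], where δ > 0 satisfies Kδ ≤ ν₀/5. Assume 0 < Kδ(β_c(0)+β₊(0)+β₋(0)) < (ν₀/10)β₊(0) and that the bootstrap bound Kδ(β_c+β₊+β₋) ≤ ν₀β₊ holds on [0,T]. Then β₊ is positive and satisfies β₊'(t) ≥ ν₀β₊(t) for all t ∈ [0,T]; in particular β₊(t) ≥ e^{ν₀ t}β₊(0). -/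

import Mathlib

open Real Filter

theorem stmt17 (ν₀ K δ T : ℝ) (hν : 0 < ν₀) (hK : 0 < K) (hδ : 0 < δ)
    (hKδ : K * δ ≤ ν₀ / 5) (hT : 0 ≤ T) (βp βm βc : ℝ → ℝ)
    (hnn : ∀ t ∈ Set.Icc (0 : ℝ) T, 0 ≤ βp t ∧ 0 ≤ βm t ∧ 0 ≤ βc t)
    (hd : ∀ t ∈ Set.Icc (0 : ℝ) T,
      DifferentiableAt ℝ βp t ∧ DifferentiableAt ℝ βm t ∧ DifferentiableAt ℝ βc t)
    (hineq : ∀ t ∈ Set.Icc (0 : ℝ) T,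
      |deriv βc t| + |deriv βp t - 2 * ν₀ * βp t| + |deriv βm t + 2 * ν₀ * βm t| ≤
        K * δ * (βc t + βp t + βm t))
    (hinit0 : 0 < K * δ * (βc 0 + βp 0 + βm 0))
    (hinit1 : K * δ * (βc 0 + βp 0 + βm 0) < ν₀ / 10 * βp 0)
    (hboot : ∀ t ∈ Set.Icc (0 : ℝ) T, K * δ * (βc t + βp t + βm t) ≤ ν₀ * βp t) :
    ∀ t ∈ Set.Icc (0 : ℝ) T,
      0 < βp t ∧ ν₀ * βp t ≤ deriv βp t ∧ Real.exp (ν₀ * t) * βp 0 ≤ βp t := by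
  have hβp0 : 0 < βp 0 := by nlinarith
  have hder : ∀ t ∈ Set.Icc (0:ℝ) T, ν₀ * βp t ≤ deriv βp t := by
    intro t ht
    have h1 := hineq t ht
    have h2 := hboot t ht
    have h3 : |deriv βp t - 2 * ν₀ * βp t| ≤ ν₀ * βp t := by
      have a1 := abs_nonneg (deriv βc t)
      have a2 := abs_nonneg (deriv βm t + 2 * ν₀ * βm t)
      linarith
    have h4 := (abs_le.mp h3).1
    linarith
  set g : ℝ → ℝ := fun t => Real.exp (-ν₀ * t) * βp t with hg
  have hgd : ∀ t ∈ Set.Icc (0:ℝ) T,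
      HasDerivAt g (Real.exp (-ν₀ * t) * (deriv βp t - ν₀ * βp t)) t := by
    intro t ht
    have h1 : HasDerivAt (fun t => Real.exp (-ν₀ * t)) (-ν₀ * Real.exp (-ν₀ * t)) t := by
      have := ((hasDerivAt_id t).const_mul (-ν₀)).exp
      simpa [mul_comm] using this
    have h2 := (hd t ht).1.hasDerivAt
    have := h1.mul h2
    refine this.congr_deriv ?_
    ring
  have hmono : MonotoneOn g (Set.Icc 0 T) := by
    apply monotoneOn_of_deriv_nonneg (convex_Icc 0 T)
    · exact fun t ht => (hgd t ht).continuousAt.continuousWithinAt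
    · intro t ht
      rw [interior_Icc] at ht
      exact (hgd t (Set.mem_Icc_of_Ioo ht)).differentiableAt.differentiableWithinAt
    · intro t ht
      rw [interior_Icc] at ht
      have ht' := Set.mem_Icc_of_Ioo ht
      rw [(hgd t ht').deriv]
      exact mul_nonneg (Real.exp_pos _).le (by linarith [hder t ht'])
  intro t ht
  have h0 : (0:ℝ) ∈ Set.Icc (0:ℝ) T := Set.mem_Icc.mpr ⟨le_refl _, hT⟩
  have hgle : g 0 ≤ g t := hmono h0 ht ht.1
  have hg0 : g 0 = βp 0 := by simp [hg]
  have hgt : g t = Real.exp (-ν₀ * t) * βp t := rfl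
  have hexp : Real.exp (ν₀ * t) * Real.exp (-ν₀ * t) = 1 := by
    rw [← Real.exp_add]; ring_nf; exact Real.exp_zero
  have key : Real.exp (ν₀ * t) * βp 0 ≤ βp t := by
    have := mul_le_mul_of_nonneg_left hgle (Real.exp_pos (ν₀ * t)).le
    rw [hg0, hgt, ← mul_assoc, hexp, one_mul] at this
    exact this
  refine ⟨lt_of_lt_of_le (by positivity) key, hder t ht, key⟩
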